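/- Let G be a compact topological group acting continuously on a Banach space L by affine transformations, and let Φ : L → C(G,L) be defined by Φ(x)(g) = g·x. Then the image Φ(L) is a closed subset of C(G,L) with the sup norm. -/

import Mathlib

/-- Let `G` be a compact topological group acting continuously on a Banach space `L`
by affine transformations, and let `Φ : L → C(G, L)` be defined by `Φ(x)(g) = g • x`.
Then the image `Φ(L)` is a closed subset of `C(G, L)` with the sup norm. -/
theorem Phi_range_closed {G L : Type*} [Group G] [TopologicalSpace G] [IsTopologicalGroup G]
    [CompactSpace G] [NormedAddCommGroup L] [NormedSpace ℝ L] [CompleteSpace L]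
    [MulAction G L] [ContinuousSMul G L]
    (haff : ∀ (g : G) (t : ℝ), t ∈ Set.Icc (0 : ℝ) 1 → ∀ x y : L,
      g • (t • x + (1 - t) • y) = t • (g • x) + (1 - t) • (g • y))
    (Φ : L → C(G, L)) (hΦ : ∀ (x : L) (g : G), Φ x g = g • x) :
    IsClosed (Set.range Φ) := by
  apply IsSeqClosed.isClosed
  intro f F hf hF
  choose x hx using hf
  refine ⟨F 1, ?_⟩
  have hev : ∀ g : G, Filter.Tendsto (fun n => f n g) Filter.atTop (nhds (F g)) := by
    intro g
    exact ((continuous_eval_const g).tendsto F).comp hF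
  have hx1 : Filter.Tendsto x Filter.atTop (nhds (F 1)) := by
    have := hev 1
    simpa only [fun n => (hx n).symm, hΦ, one_smul] using this
  ext g
  have h1 : Filter.Tendsto (fun n => f n g) Filter.atTop (nhds (g • F 1)) := by
    have hc : Continuous fun y : L => g • y := continuous_const_smul g
    have := (hc.tendsto (F 1)).comp hx1
    simpa only [fun n => (hx n).symm, hΦ, Function.comp_def] using this
  have := tendsto_nhds_unique (hev g) h1
  rw [hΦ]
  exact this.symm
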